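/- Let K_{m,n} be the non-abelian metacyclic group of order 2mn presented by a^m = 1, b^{2n} = a^g, bab⁻¹ = a⁻¹, and suppose m is even and g = m/2. If k is an odd positive divisor of 2mn and l = gcd(k, m), then the subgroup generated by a^{m/l} and a^{m/(2l)} b^{2nl/k} is a normal subgroup of K_{m,n} of order k. -/

import Mathlib

/-- The relations of the metacyclic presentation
`K_{m,n} = ⟨a, b : a^m = 1, b^(2n) = a^g, b a b⁻¹ = a⁻¹⟩`, with generator `0`
playing the role of `a` and generator `1` playing the role of `b`. -/
def Krels (m n g : ℕ) : Set (FreeGroup (Fin 2)) :=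
  {FreeGroup.of 0 ^ m,
   FreeGroup.of 1 ^ (2 * n) * (FreeGroup.of 0 ^ g)⁻¹,
   FreeGroup.of 1 * FreeGroup.of 0 * (FreeGroup.of 1)⁻¹ * FreeGroup.of 0}

namespace Stmt19Aux

variable {M : ℕ}

/-- translation permutation of `ZMod M × ZMod M`. -/
def T (s : ZMod M × ZMod M) : Equiv.Perm (ZMod M × ZMod M) :=
  (Equiv.addRight s.1).prodCongr (Equiv.addRight s.2)

@[simp] lemma T_apply (s p : ZMod M × ZMod M) : T s p = (p.1 + s.1, p.2 + s.2) := rfl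

lemma T_mul (s t : ZMod M × ZMod M) : T s * T t = T (s + t) := by
  apply Equiv.ext
  intro p
  simp only [Equiv.Perm.mul_apply, T_apply, Prod.fst_add, Prod.snd_add]
  exact Prod.ext (by ring) (by ring)

lemma T_one : (T 0 : Equiv.Perm (ZMod M × ZMod M)) = 1 := by
  apply Equiv.ext
  intro p
  simp [T_apply]

lemma T_pow (s : ZMod M × ZMod M) (j : ℕ) : T s ^ j = T (j • s) := by
  induction j with
  | zero => simp [T_one]
  | succ j ih => rw [pow_succ, ih, T_mul, succ_nsmul]

lemma T_inv (s : ZMod M × ZMod M) : (T s)⁻¹ = T (-s) := by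
  apply inv_eq_of_mul_eq_one_right
  rw [T_mul, add_neg_cancel, T_one]

lemma T_injective : Function.Injective (T : ZMod M × ZMod M → Equiv.Perm (ZMod M × ZMod M)) := by
  intro s t h
  have := congrArg (fun e : Equiv.Perm (ZMod M × ZMod M) => e (0, 0)) h
  simpa [T_apply, Prod.ext_iff] using this

/-- the "antidiagonal" permutation used as image of `b`. -/
def B (μ : ZMod M) : Equiv.Perm (ZMod M × ZMod M) where
  toFun p := (p.2, p.1 + μ)
  invFun p := (p.2 - μ, p.1)
  left_inv p := by simp
  right_inv p := by simp

@[simp] lemma B_apply (μ : ZMod M) (p : ZMod M × ZMod M) : B μ p = (p.2, p.1 + μ) := rfl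

@[simp] lemma B_inv_apply (μ : ZMod M) (p : ZMod M × ZMod M) : (B μ)⁻¹ p = (p.2 - μ, p.1) := rfl

lemma B_sq (μ : ZMod M) : B μ ^ 2 = T (μ, μ) := by
  apply Equiv.ext
  intro p
  simp [pow_succ, Equiv.Perm.mul_apply]

end Stmt19Aux

open Stmt19Aux in
theorem stmt19 (m n k : ℕ) (hmeven : Even m) (hm : 1 ≤ m) (hn : 1 ≤ n)
    (hna : ¬ ∀ x y : PresentedGroup (Krels m n (m / 2)), x * y = y * x)
    (hkpos : 0 < k) (hk : k ∣ 2 * m * n) (hkodd : Odd k) :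
    (Subgroup.closure
        {(PresentedGroup.of 0 : PresentedGroup (Krels m n (m / 2))) ^ (m / Nat.gcd k m),
         (PresentedGroup.of 0 : PresentedGroup (Krels m n (m / 2))) ^ (m / (2 * Nat.gcd k m)) *
           PresentedGroup.of 1 ^ (2 * n * Nat.gcd k m / k)}).Normal ∧
    Nat.card (Subgroup.closure
        {(PresentedGroup.of 0 : PresentedGroup (Krels m n (m / 2))) ^ (m / Nat.gcd k m),
         (PresentedGroup.of 0 : PresentedGroup (Krels m n (m / 2))) ^ (m / (2 * Nat.gcd k m)) *
           PresentedGroup.of 1 ^ (2 * n * Nat.gcd k m / k)}) = k := by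
  classical
  -- arithmetic setup
  set l := Nat.gcd k m with hldef
  have hlpos : 0 < l := Nat.gcd_pos_of_pos_right k hm
  have hlk : l ∣ k := Nat.gcd_dvd_left k m
  have hlm : l ∣ m := Nat.gcd_dvd_right k m
  have hlodd : Odd l := by
    obtain ⟨c, hc⟩ := hlk
    exact (Nat.odd_mul.mp (hc ▸ hkodd)).1
  have h2l : 2 * l ∣ m :=
    (Nat.coprime_two_left.mpr hlodd).mul_dvd_of_dvd_of_dvd hmeven.two_dvd hlm
  set k' := k / l with hk'def
  have hkk' : k = l * k' := (Nat.mul_div_cancel' hlk).symm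
  have hk'odd : Odd k' := (Nat.odd_mul.mp (hkk' ▸ hkodd)).2
  have hk'pos : 0 < k' := by
    rcases Nat.eq_zero_or_pos k' with h | h
    · rw [h, mul_zero] at hkk'; omega
    · exact h
  have hk2n : k' ∣ 2 * n := by
    have h1 : k ∣ m * (2 * n) := by
      have : m * (2 * n) = 2 * m * n := by ring
      rw [this]; exact hk
    obtain ⟨c, hc⟩ := h1
    have h2 : k' ∣ (m / l) * (2 * n) := by
      refine ⟨c, ?_⟩
      apply Nat.eq_of_mul_eq_mul_left hlpos
      calc l * (m / l * (2 * n)) = (l * (m / l)) * (2 * n) := by ring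
        _ = m * (2 * n) := by rw [Nat.mul_div_cancel' hlm]
        _ = k * c := hc
        _ = l * (k' * c) := by rw [hkk']; ring
    have hcop : Nat.Coprime k' (m / l) := Nat.coprime_div_gcd_div_gcd hlpos
    exact hcop.dvd_of_dvd_mul_left h2
  have hk'n : k' ∣ n := (Nat.coprime_two_right.mpr hk'odd).dvd_of_dvd_mul_left hk2n
  set n' := n / k' with hn'def
  have hnn' : n = k' * n' := (Nat.mul_div_cancel' hk'n).symm
  have hn'pos : 0 < n' := by
    rcases Nat.eq_zero_or_pos n' with h | h
    · rw [h, mul_zero] at hnn'; omega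
    · exact h
  obtain ⟨q, hq⟩ := hlm
  have hqv : m / l = q := by rw [hq, Nat.mul_div_cancel_left _ hlpos]
  have hqpos : 0 < q := by
    rcases Nat.eq_zero_or_pos q with h | h
    · rw [h, mul_zero] at hq; omega
    · exact h
  obtain ⟨e, he⟩ := h2l
  have hev : m / (2 * l) = e := by
    rw [he, Nat.mul_div_cancel_left _ (by omega : 0 < 2 * l)]
  have hq2e : q = 2 * e := by
    have h1 : l * q = l * (2 * e) := by rw [← hq, he]; ring
    exact Nat.eq_of_mul_eq_mul_left hlpos h1
  have htv : 2 * n * l / k = 2 * n' := by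
    have h1 : 2 * n * l = k * (2 * n') := by rw [hkk', hnn']; ring
    rw [h1, Nat.mul_div_cancel_left _ hkpos]
  have hm2 : m / 2 = l * e := by
    rw [he, show 2 * l * e = 2 * (l * e) by ring, Nat.mul_div_cancel_left _ (by omega : 0 < 2)]
  rw [hqv, hev, htv]
  -- names for the group and its generators
  set a : PresentedGroup (Krels m n (m / 2)) := PresentedGroup.of 0 with hadef
  set b : PresentedGroup (Krels m n (m / 2)) := PresentedGroup.of 1 with hbdef
  -- the defining relations
  have hrelhold : ∀ r ∈ Krels m n (m / 2), PresentedGroup.mk (Krels m n (m / 2)) r = 1 := by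
    intro r hr
    exact (QuotientGroup.eq_one_iff r).mpr (Subgroup.subset_normalClosure hr)
  have hrel1 : a ^ m = 1 := by
    have h := hrelhold _ (Set.mem_insert _ _)
    rw [map_pow] at h
    exact h
  have hrel2 : b ^ (2 * n) = a ^ (l * e) := by
    have h := hrelhold _ (Set.mem_insert_of_mem _ (Set.mem_insert _ _))
    rw [map_mul, map_inv, map_pow, map_pow] at h
    rw [← hm2]
    exact mul_inv_eq_one.mp h
  have hrel3 : b * a * b⁻¹ = a⁻¹ := by
    have h := hrelhold _ (Set.mem_insert_of_mem _ (Set.mem_insert_of_mem _ rfl))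
    rw [map_mul, map_mul, map_mul, map_inv] at h
    exact eq_inv_of_mul_eq_one_left h
  -- derived relations
  have hconjpow : ∀ i : ℕ, b * a ^ i * b⁻¹ = (a ^ i)⁻¹ := by
    intro i
    have h := map_pow (MulAut.conj b) a i
    simp only [MulAut.conj_apply] at h
    rw [h, hrel3, inv_pow]
  have hbinvpow : ∀ i : ℕ, b⁻¹ * a ^ i * b = (a ^ i)⁻¹ := by
    have h3 : b⁻¹ * a * b = a⁻¹ := by
      have e1 : a = b⁻¹ * a⁻¹ * b := by rw [← hrel3]; group
      calc b⁻¹ * a * b = (b⁻¹ * a⁻¹ * b)⁻¹ := by group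
        _ = a⁻¹ := by rw [← e1]
    intro i
    have h := map_pow (MulAut.conj b⁻¹) a i
    simp only [MulAut.conj_apply, inv_inv] at h
    rw [h, h3, inv_pow]
  have hcomm : Commute a (b ^ 2) := by
    have e2 : b * a⁻¹ * b⁻¹ = a := by
      calc b * a⁻¹ * b⁻¹ = (b * a * b⁻¹)⁻¹ := by group
        _ = a := by rw [hrel3, inv_inv]
    have e4 : b ^ 2 * a = a * b ^ 2 := by
      calc b ^ 2 * a = b * (b * a * b⁻¹) * b⁻¹ * b ^ 2 := by rw [pow_two]; group
        _ = b * a⁻¹ * b⁻¹ * b ^ 2 := by rw [hrel3]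
        _ = a * b ^ 2 := by rw [e2]
    exact e4.symm
  -- the subgroup
  set x := a ^ q with hxdef
  set y := a ^ e * b ^ (2 * n') with hydef
  set S := Subgroup.closure {x, y} with hSdef
  have hxS : x ∈ S := Subgroup.subset_closure (Set.mem_insert _ _)
  have hyS : y ∈ S := Subgroup.subset_closure (Set.mem_insert_of_mem _ rfl)
  have hbt : b ^ (2 * n') = (b ^ 2) ^ n' := by rw [pow_mul]
  have hcax : Commute a x := (Commute.refl a).pow_right q
  have hcay : Commute a y := by
    have h1 : Commute a (b ^ (2 * n')) := by rw [hbt]; exact hcomm.pow_right n'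
    exact ((Commute.refl a).pow_right e).mul_right h1
  have hcxy : Commute x y := by
    have h1 : Commute x (b ^ (2 * n')) := by rw [hbt]; exact hcomm.pow_pow q n'
    exact ((Commute.refl a).pow_pow q e).mul_right h1
  have hxl : x ^ l = 1 := by
    calc x ^ l = a ^ (q * l) := by rw [hxdef, ← pow_mul]
      _ = a ^ m := by rw [show q * l = m from by rw [hq, Nat.mul_comm]]
      _ = 1 := hrel1
  obtain ⟨w, hw⟩ := hk'odd.add_odd hlodd
  have hexp : e * k' + l * e = q * w := by
    rw [hq2e]
    calc e * k' + l * e = e * (k' + l) := by ring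
      _ = e * (w + w) := by rw [hw]
      _ = 2 * e * w := by ring
  have hyk' : y ^ k' = x ^ w := by
    have h1 : Commute (a ^ e) (b ^ (2 * n')) := by rw [hbt]; exact hcomm.pow_pow e n'
    calc y ^ k' = (a ^ e) ^ k' * (b ^ (2 * n')) ^ k' := h1.mul_pow k'
      _ = a ^ (e * k') * b ^ (2 * n' * k') := by rw [← pow_mul, ← pow_mul]
      _ = a ^ (e * k') * b ^ (2 * n) := by rw [show 2 * n' * k' = 2 * n from by rw [hnn']; ring]
      _ = a ^ (e * k') * a ^ (l * e) := by rw [hrel2]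
      _ = a ^ (e * k' + l * e) := by rw [← pow_add]
      _ = a ^ (q * w) := by rw [hexp]
      _ = x ^ w := by rw [pow_mul]
  have hxLL : x ^ (l * k') = 1 := by rw [pow_mul, hxl, one_pow]
  have hyLL : y ^ (l * k') = 1 := by
    rw [mul_comm, pow_mul, hyk', ← pow_mul, mul_comm w l, pow_mul, hxl, one_pow]
  -- conjugation action on the generators
  have hbx : b * x * b⁻¹ = x⁻¹ := hconjpow q
  have hbx' : b⁻¹ * x * b = x⁻¹ := hbinvpow q
  have hxinvy : x⁻¹ * y = (a ^ e)⁻¹ * b ^ (2 * n') := by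
    rw [hxdef, hydef, hq2e, two_mul, pow_add]
    simp only [mul_inv_rev, mul_assoc, inv_mul_cancel_left]
  have hbb : ∀ g : PresentedGroup (Krels m n (m / 2)),
      g * b ^ (2 * n') * g⁻¹ = b ^ (2 * n') → g * y * g⁻¹ = x⁻¹ * y → True := fun _ _ _ => trivial
  have hby : b * y * b⁻¹ = x⁻¹ * y := by
    calc b * y * b⁻¹ = (b * a ^ e * b⁻¹) * (b * b ^ (2 * n') * b⁻¹) := by
          rw [hydef]; simp only [mul_assoc, inv_mul_cancel_left]
      _ = (a ^ e)⁻¹ * (b * b ^ (2 * n') * b⁻¹) := by rw [hconjpow e]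
      _ = (a ^ e)⁻¹ * b ^ (2 * n') := by
          rw [((Commute.refl b).pow_right (2 * n')).eq, mul_inv_cancel_right]
      _ = x⁻¹ * y := hxinvy.symm
  have hby' : b⁻¹ * y * b = x⁻¹ * y := by
    calc b⁻¹ * y * b = (b⁻¹ * a ^ e * b) * (b⁻¹ * b ^ (2 * n') * b) := by
          rw [hydef]; simp only [mul_assoc, mul_inv_cancel_left]
      _ = (a ^ e)⁻¹ * (b⁻¹ * b ^ (2 * n') * b) := by rw [hbinvpow e]
      _ = (a ^ e)⁻¹ * b ^ (2 * n') := by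
          rw [(((Commute.refl b).pow_right (2 * n')).inv_left).eq, inv_mul_cancel_right]
      _ = x⁻¹ * y := hxinvy.symm
  -- membership stability under commuting with `a`
  have hcent : ∀ h ∈ S, a * h = h * a := by
    intro h hh
    refine Subgroup.closure_induction (p := fun g _ => a * g = g * a) ?_ ?_ ?_ ?_ hh
    · intro u hu
      simp only [Set.mem_insert_iff, Set.mem_singleton_iff] at hu
      rcases hu with rfl | rfl
      · exact hcax.eq
      · exact hcay.eq
    · simp
    · intro u v _ _ ihu ihv
      rw [← mul_assoc, ihu, mul_assoc, ihv, ← mul_assoc]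
    · intro u _ ihu
      exact (Commute.inv_right (ihu : Commute a u)).eq
  have Cfwd : ∀ h ∈ S, b * h * b⁻¹ ∈ S := by
    intro h hh
    refine Subgroup.closure_induction (p := fun g _ => b * g * b⁻¹ ∈ S) ?_ ?_ ?_ ?_ hh
    · intro u hu
      simp only [Set.mem_insert_iff, Set.mem_singleton_iff] at hu
      rcases hu with rfl | rfl
      · rw [hbx]; exact S.inv_mem hxS
      · rw [hby]; exact S.mul_mem (S.inv_mem hxS) hyS
    · show b * 1 * b⁻¹ ∈ S
      rw [mul_one, mul_inv_cancel]; exact S.one_mem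
    · intro u v _ _ ihu ihv
      have h1 : b * (u * v) * b⁻¹ = (b * u * b⁻¹) * (b * v * b⁻¹) := by group
      rw [h1]; exact S.mul_mem ihu ihv
    · intro u _ ihu
      have h1 : b * u⁻¹ * b⁻¹ = (b * u * b⁻¹)⁻¹ := by group
      rw [h1]; exact S.inv_mem ihu
  have Cbwd : ∀ h ∈ S, b⁻¹ * h * b ∈ S := by
    intro h hh
    refine Subgroup.closure_induction (p := fun g _ => b⁻¹ * g * b ∈ S) ?_ ?_ ?_ ?_ hh
    · intro u hu
      simp only [Set.mem_insert_iff, Set.mem_singleton_iff] at hu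
      rcases hu with rfl | rfl
      · rw [hbx']; exact S.inv_mem hxS
      · rw [hby']; exact S.mul_mem (S.inv_mem hxS) hyS
    · show b⁻¹ * 1 * b ∈ S
      rw [mul_one, inv_mul_cancel]; exact S.one_mem
    · intro u v _ _ ihu ihv
      have h1 : b⁻¹ * (u * v) * b = (b⁻¹ * u * b) * (b⁻¹ * v * b) := by group
      rw [h1]; exact S.mul_mem ihu ihv
    · intro u _ ihu
      have h1 : b⁻¹ * u⁻¹ * b = (b⁻¹ * u * b)⁻¹ := by group
      rw [h1]; exact S.inv_mem ihu
  have hmemnorm : ∀ g : PresentedGroup (Krels m n (m / 2)), g ∈ Subgroup.normalizer (S : Set (PresentedGroup (Krels m n (m / 2)))) := by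
    intro g
    refine PresentedGroup.generated_by _ _ ?_ g
    intro j
    fin_cases j
    · show a ∈ Subgroup.normalizer (S : Set (PresentedGroup (Krels m n (m / 2))))
      rw [Subgroup.mem_normalizer_iff]
      intro h
      constructor
      · intro hh
        have h1 : a * h * a⁻¹ = h := by rw [hcent _ hh, mul_inv_cancel_right]
        rw [h1]; exact hh
      · intro hh
        have h3 := hcent _ hh
        have h5 : a⁻¹ * ((a * h * a⁻¹) * a) = a * h * a⁻¹ := by rw [← h3]; group
        have h6 : a⁻¹ * ((a * h * a⁻¹) * a) = h := by group
        have h4 : h = a * h * a⁻¹ := h6.symm.trans h5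
        rw [h4]; exact hh
    · show b ∈ Subgroup.normalizer (S : Set (PresentedGroup (Krels m n (m / 2))))
      rw [Subgroup.mem_normalizer_iff]
      intro h
      constructor
      · exact fun hh => Cfwd h hh
      · intro hh
        have h2 := Cbwd _ hh
        have h3 : b⁻¹ * (b * h * b⁻¹) * b = h := by group
        rwa [h3] at h2
  have hnormal : S.Normal :=
    Subgroup.normalizer_eq_top_iff.mp ((Subgroup.eq_top_iff' _).mpr hmemnorm)
  -- upper bound for the cardinality
  have hLpos : 0 < l * k' := Nat.mul_pos hlpos hk'pos
  have hxi_inv : ∀ i : ℕ, (x ^ i)⁻¹ = x ^ ((l * k' - 1) * i) := by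
    intro i
    have hx1 : x⁻¹ = x ^ (l * k' - 1) := by
      apply inv_eq_of_mul_eq_one_right
      rw [← pow_succ', Nat.sub_add_cancel hLpos]
      exact hxLL
    rw [← inv_pow, hx1, ← pow_mul]
  have hyi_inv : ∀ i : ℕ, (y ^ i)⁻¹ = y ^ ((l * k' - 1) * i) := by
    intro i
    have hy1 : y⁻¹ = y ^ (l * k' - 1) := by
      apply inv_eq_of_mul_eq_one_right
      rw [← pow_succ', Nat.sub_add_cancel hLpos]
      exact hyLL
    rw [← inv_pow, hy1, ← pow_mul]
  have hform : ∀ h ∈ S, ∃ i j : ℕ, h = x ^ i * y ^ j := by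
    intro h hh
    refine Subgroup.closure_induction (p := fun g _ => ∃ i j : ℕ, g = x ^ i * y ^ j)
      ?_ ?_ ?_ ?_ hh
    · intro u hu
      simp only [Set.mem_insert_iff, Set.mem_singleton_iff] at hu
      rcases hu with rfl | rfl
      · exact ⟨1, 0, by simp⟩
      · exact ⟨0, 1, by simp⟩
    · exact ⟨0, 0, by simp⟩
    · rintro u v _ _ ⟨i, j, rfl⟩ ⟨i', j', rfl⟩
      refine ⟨i + i', j + j', ?_⟩
      rw [pow_add, pow_add]
      exact (hcxy.symm.pow_pow j i').mul_mul_mul_comm (x ^ i) (y ^ j')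
    · rintro u _ ⟨i, j, rfl⟩
      refine ⟨(l * k' - 1) * i, (l * k' - 1) * j, ?_⟩
      rw [mul_inv_rev, hxi_inv i, hyi_inv j]
      exact ((hcxy.pow_pow ((l * k' - 1) * i) ((l * k' - 1) * j)).eq).symm
  have hred : ∀ i j : ℕ, ∃ u : Fin l × Fin k',
      x ^ i * y ^ j = x ^ ((u.1 : ℕ)) * y ^ ((u.2 : ℕ)) := by
    intro i j
    refine ⟨(⟨(i + w * (j / k')) % l, Nat.mod_lt _ hlpos⟩, ⟨j % k', Nat.mod_lt _ hk'pos⟩), ?_⟩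
    calc x ^ i * y ^ j = x ^ i * y ^ (k' * (j / k') + j % k') := by rw [Nat.div_add_mod]
      _ = x ^ i * ((y ^ k') ^ (j / k') * y ^ (j % k')) := by rw [pow_add, pow_mul]
      _ = x ^ i * (x ^ (w * (j / k')) * y ^ (j % k')) := by rw [hyk', ← pow_mul x w (j / k')]
      _ = x ^ (i + w * (j / k')) * y ^ (j % k') := by rw [← mul_assoc, ← pow_add]
      _ = x ^ ((i + w * (j / k')) % l + l * ((i + w * (j / k')) / l)) * y ^ (j % k') := by
          rw [Nat.mod_add_div]
      _ = x ^ ((i + w * (j / k')) % l) * y ^ (j % k') := by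
          rw [pow_add, pow_mul, hxl, one_pow, mul_one]
  have hsub : (S : Set (PresentedGroup (Krels m n (m / 2)))) ⊆
      Set.range (fun u : Fin l × Fin k' => x ^ ((u.1 : ℕ)) * y ^ ((u.2 : ℕ))) := by
    intro p hp
    obtain ⟨i, j, rfl⟩ := hform p hp
    obtain ⟨u, hu⟩ := hred i j
    exact ⟨u, hu.symm⟩
  have hSfin : (S : Set (PresentedGroup (Krels m n (m / 2)))).Finite :=
    (Set.finite_range _).subset hsub
  have hfinS : Finite S := hSfin.to_subtype
  have hcard_le : Nat.card S ≤ k := by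
    calc Nat.card S
        ≤ Nat.card (Set.range (fun u : Fin l × Fin k' => x ^ ((u.1 : ℕ)) * y ^ ((u.2 : ℕ)))) :=
          Nat.card_mono (Set.finite_range _) hsub
      _ ≤ Nat.card (Fin l × Fin k') := Finite.card_range_le _
      _ = l * k' := by simp
      _ = k := hkk'.symm
  -- concrete permutation model for the lower bound
  set M := Nat.lcm m (2 * n) with hMdef
  obtain ⟨cm, hcm⟩ : m ∣ M := Nat.dvd_lcm_left _ _
  obtain ⟨cn, hcn⟩ : 2 * n ∣ M := Nat.dvd_lcm_right _ _
  have hMpos : 0 < M := Nat.pos_of_ne_zero (Nat.lcm_ne_zero (by omega) (by omega))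
  have hcmpos : 0 < cm := by
    rcases Nat.eq_zero_or_pos cm with h | h
    · rw [h, mul_zero] at hcm; omega
    · exact h
  have hcnpos : 0 < cn := by
    rcases Nat.eq_zero_or_pos cn with h | h
    · rw [h, mul_zero] at hcn; omega
    · exact h
  set zeta : ZMod M := (cm : ZMod M) with hzeta
  set mu : ZMod M := (cn : ZMod M) with hmu
  set A : Equiv.Perm (ZMod M × ZMod M) := T (zeta, -zeta) with hAdef
  set Bp : Equiv.Perm (ZMod M × ZMod M) := B mu with hBpdef
  have hApow : ∀ j : ℕ, A ^ j = T (((j * cm : ℕ) : ZMod M), -((j * cm : ℕ) : ZMod M)) := by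
    intro j
    rw [hAdef, T_pow, Prod.smul_mk]
    refine congrArg T (Prod.ext ?_ ?_)
    · show j • zeta = ((j * cm : ℕ) : ZMod M)
      rw [nsmul_eq_mul, hzeta]; push_cast; ring
    · show j • (-zeta) = -((j * cm : ℕ) : ZMod M)
      rw [smul_neg, nsmul_eq_mul, hzeta]; push_cast; ring
  have hBpow : ∀ j : ℕ, Bp ^ (2 * j) = T (((j * cn : ℕ) : ZMod M), ((j * cn : ℕ) : ZMod M)) := by
    intro j
    rw [pow_mul, hBpdef, B_sq, T_pow, Prod.smul_mk]
    refine congrArg T (Prod.ext ?_ ?_) <;>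
      (show j • mu = ((j * cn : ℕ) : ZMod M); rw [nsmul_eq_mul, hmu]; push_cast; ring)
  have hfrel : ∀ r ∈ Krels m n (m / 2), FreeGroup.lift ![A, Bp] r = 1 := by
    intro r hr
    simp only [Krels, Set.mem_insert_iff, Set.mem_singleton_iff] at hr
    rcases hr with rfl | rfl | rfl
    · rw [map_pow]
      simp only [FreeGroup.lift_apply_of, Matrix.cons_val_zero]
      rw [hApow m]
      have h0 : ((m * cm : ℕ) : ZMod M) = 0 := by rw [← hcm]; exact ZMod.natCast_self M
      rw [h0, neg_zero]
      exact T_one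
    · rw [map_mul, map_inv, map_pow, map_pow]
      simp only [FreeGroup.lift_apply_of, Matrix.cons_val_zero, Matrix.cons_val_one, Matrix.head_cons]
      have hnc : n * cn = l * e * cm := by
        have h1 : 2 * (n * cn) = 2 * (l * e * cm) := by
          calc 2 * (n * cn) = 2 * n * cn := by ring
            _ = M := hcn.symm
            _ = m * cm := hcm
            _ = 2 * (l * e * cm) := by rw [he]; ring
        omega
      have hsum : ((n * cn : ℕ) : ZMod M) + ((l * e * cm : ℕ) : ZMod M) = 0 := by
        rw [← Nat.cast_add]
        have h2 : n * cn + l * e * cm = M := by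
          rw [← hnc]
          calc n * cn + n * cn = 2 * n * cn := by ring
            _ = M := hcn.symm
        rw [h2]; exact ZMod.natCast_self M
      rw [hBpow n, hm2, hApow (l * e), T_inv, T_mul]
      have harg : (((n * cn : ℕ) : ZMod M), ((n * cn : ℕ) : ZMod M)) +
          -((((l * e * cm : ℕ) : ZMod M)), -(((l * e * cm : ℕ) : ZMod M))) = 0 := by
        rw [Prod.ext_iff]
        constructor
        · show ((n * cn : ℕ) : ZMod M) + -((l * e * cm : ℕ) : ZMod M) = 0
          rw [hnc]; ring
        · show ((n * cn : ℕ) : ZMod M) + -(-((l * e * cm : ℕ) : ZMod M)) = 0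
          rw [neg_neg]; exact hsum
      rw [harg]
      exact T_one
    · simp only [map_mul, map_inv, FreeGroup.lift_apply_of, Matrix.cons_val_zero,
        Matrix.cons_val_one, Matrix.head_cons]
      apply Equiv.ext
      rintro ⟨p1, p2⟩
      rw [hAdef, hBpdef]
      simp only [Equiv.Perm.mul_apply, T_apply, B_apply, B_inv_apply, Equiv.Perm.one_apply]
      rw [Prod.mk.injEq]
      constructor <;> ring
  let psi : PresentedGroup (Krels m n (m / 2)) →* Equiv.Perm (ZMod M × ZMod M) :=
    PresentedGroup.toGroup hfrel
  have hpsia : psi a = A := by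
    rw [hadef]
    show PresentedGroup.toGroup hfrel (PresentedGroup.of 0) = A
    rw [PresentedGroup.toGroup.of]
    simp
  have hpsib : psi b = Bp := by
    rw [hbdef]
    show PresentedGroup.toGroup hfrel (PresentedGroup.of 1) = Bp
    rw [PresentedGroup.toGroup.of]
    simp
  have hpsix : psi x = T (((q * cm : ℕ) : ZMod M), -((q * cm : ℕ) : ZMod M)) := by
    rw [hxdef, map_pow, hpsia, hApow]
  set z := y * y * x⁻¹ with hzdef
  have hzS : z ∈ S := S.mul_mem (S.mul_mem hyS hyS) (S.inv_mem hxS)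
  have hpsiy : psi y = T (((e * cm : ℕ) : ZMod M) + ((n' * cn : ℕ) : ZMod M),
      -((e * cm : ℕ) : ZMod M) + ((n' * cn : ℕ) : ZMod M)) := by
    rw [hydef, map_mul, map_pow, map_pow, hpsia, hApow, hpsib, hBpow, T_mul, Prod.mk_add_mk]
  have hpsiz : psi z = T (((2 * (n' * cn) : ℕ) : ZMod M), ((2 * (n' * cn) : ℕ) : ZMod M)) := by
    rw [hzdef, map_mul, map_mul, map_inv, hpsiy, hpsix, T_inv, T_mul, T_mul]
    congr 1
    have hqe : ((q * cm : ℕ) : ZMod M) = ((e * cm : ℕ) : ZMod M) + ((e * cm : ℕ) : ZMod M) := by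
      rw [hq2e]; push_cast; ring
    rw [Prod.ext_iff]
    simp only [Prod.fst_add, Prod.snd_add, Prod.fst_neg, Prod.snd_neg]
    constructor
    · rw [hqe]; push_cast; ring
    · rw [hqe]; push_cast; ring
  have hpsicomb : ∀ i j : ℕ, psi (x ^ i * z ^ j) =
      T (((i * (q * cm) : ℕ) : ZMod M) + ((j * (2 * (n' * cn)) : ℕ) : ZMod M),
        -((i * (q * cm) : ℕ) : ZMod M) + ((j * (2 * (n' * cn)) : ℕ) : ZMod M)) := by
    intro i j
    rw [map_mul, map_pow psi x i, map_pow psi z j, hpsix, hpsiz, T_pow, T_pow, T_mul]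
    congr 1
    rw [Prod.ext_iff]
    simp only [Prod.smul_mk, Prod.fst_add, Prod.snd_add, smul_neg, nsmul_eq_mul]
    constructor <;> (push_cast; ring)
  -- injectivity of the parametrization
  have hkey : ∀ i j i' j' : ℕ, i < l → i' < l → j < k' → j' < k' →
      x ^ i * z ^ j = x ^ i' * z ^ j' → i = i' ∧ j = j' := by
    intro i j i' j' hi hi' hj hj' hEq
    have h1 := congrArg psi hEq
    rw [hpsicomb, hpsicomb] at h1
    have h2 := T_injective h1
    rw [Prod.ext_iff] at h2
    obtain ⟨c1, c2⟩ := h2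
    have hMD : M = l * (q * cm) := by rw [hcm, hq]; ring
    have hMNu : M = k' * (2 * (n' * cn)) := by rw [hcn, hnn']; ring
    have hDne : q * cm ≠ 0 := by positivity
    have hNune : 2 * (n' * cn) ≠ 0 := by positivity
    have e1 : ((2 * j * (2 * (n' * cn)) : ℕ) : ZMod M) =
        ((2 * j' * (2 * (n' * cn)) : ℕ) : ZMod M) := by
      push_cast
      push_cast at c1 c2
      linear_combination c1 + c2
    have e2 : ((2 * i * (q * cm) : ℕ) : ZMod M) = ((2 * i' * (q * cm) : ℕ) : ZMod M) := by
      push_cast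
      push_cast at c1 c2
      linear_combination c1 - c2
    have m1 : 2 * j * (2 * (n' * cn)) ≡ 2 * j' * (2 * (n' * cn)) [MOD k' * (2 * (n' * cn))] := by
      rw [← hMNu]
      exact (ZMod.natCast_eq_natCast_iff _ _ _).mp e1
    have m2 : 2 * j ≡ 2 * j' [MOD k'] := Nat.ModEq.mul_right_cancel' hNune m1
    have m3 : j ≡ j' [MOD k'] :=
      Nat.ModEq.cancel_left_of_coprime (Nat.coprime_two_right.mpr hk'odd) m2
    have hjj : j = j' := by
      have h4 : j % k' = j' % k' := m3
      rwa [Nat.mod_eq_of_lt hj, Nat.mod_eq_of_lt hj'] at h4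
    have m1' : 2 * i * (q * cm) ≡ 2 * i' * (q * cm) [MOD l * (q * cm)] := by
      rw [← hMD]
      exact (ZMod.natCast_eq_natCast_iff _ _ _).mp e2
    have m2' : 2 * i ≡ 2 * i' [MOD l] := Nat.ModEq.mul_right_cancel' hDne m1'
    have m3' : i ≡ i' [MOD l] :=
      Nat.ModEq.cancel_left_of_coprime (Nat.coprime_two_right.mpr hlodd) m2'
    have hii : i = i' := by
      have h4 : i % l = i' % l := m3'
      rwa [Nat.mod_eq_of_lt hi, Nat.mod_eq_of_lt hi'] at h4
    exact ⟨hii, hjj⟩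
  have hinj : Function.Injective (fun u : Fin l × Fin k' =>
      (⟨x ^ ((u.1 : ℕ)) * z ^ ((u.2 : ℕ)),
        S.mul_mem (S.pow_mem hxS _) (S.pow_mem hzS _)⟩ : S)) := by
    rintro ⟨⟨i, hi⟩, ⟨j, hj⟩⟩ ⟨⟨i', hi'⟩, ⟨j', hj'⟩⟩ hEq
    have h0 : x ^ i * z ^ j = x ^ i' * z ^ j' := congrArg Subtype.val hEq
    obtain ⟨h1, h2⟩ := hkey i j i' j' hi hi' hj hj' h0
    subst h1; subst h2; rfl
  have hcard_ge : k ≤ Nat.card S := by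
    have h1 : Nat.card (Fin l × Fin k') ≤ Nat.card S :=
      Nat.card_le_card_of_injective _ hinj
    calc k = l * k' := hkk'
      _ = Nat.card (Fin l × Fin k') := by simp
      _ ≤ Nat.card S := h1
  exact ⟨hnormal, le_antisymm hcard_le hcard_ge⟩
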